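/- Let p be prime, m, n ∈ {1,...,p-1}, a ≠ b in {1,...,p-1}, and M = m+n-(p-1) ≥ 0. Then ∑_{j=0}^{M} C(m, M-j) C(n, j) a^(M-j) b^j ≡ (a-b)^M · C(m, p-n-1) mod p. -/

import Mathlib

lemma choose_neg_cast (p k : ℕ) (hp : p.Prime) :
    ∀ j : ℕ, k + j ≤ p - 1 →
      (((p - 1 - k).choose j : ZMod p)) = (-1) ^ j * (((k + j).choose j : ZMod p)) := by
  haveI : Fact p.Prime := ⟨hp⟩
  intro j
  induction j with
  | zero => simp
  | succ j ih =>
    intro hj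
    have hp2 : 2 ≤ p := hp.two_le
    have ih' := ih (by omega)
    have h1 : (p - 1 - k).choose (j + 1) * (j + 1) = (p - 1 - k).choose j * (p - 1 - k - j) :=
      Nat.choose_succ_right_eq _ _
    have h2 : (k + j + 1) * (k + j).choose j = (k + j + 1).choose (j + 1) * (j + 1) :=
      Nat.add_one_mul_choose_eq (k + j) j
    have hsum : (p - 1 - k - j) + (k + j + 1) = p := by omega
    have hneg : ((p - 1 - k - j : ℕ) : ZMod p) = -((k + j + 1 : ℕ) : ZMod p) := by
      have : (((p - 1 - k - j) + (k + j + 1) : ℕ) : ZMod p) = 0 := by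
        rw [hsum]; exact ZMod.natCast_self p
      push_cast at this ⊢
      linear_combination this
    have hju : ((j + 1 : ℕ) : ZMod p) ≠ 0 := by
      rw [Ne, ZMod.natCast_eq_zero_iff]
      intro h
      have := Nat.le_of_dvd (by omega) h
      omega
    apply mul_right_cancel₀ hju
    have c1 : (((p - 1 - k).choose (j + 1) : ZMod p)) * ((j + 1 : ℕ) : ZMod p)
        = ((p - 1 - k).choose j : ZMod p) * ((p - 1 - k - j : ℕ) : ZMod p) := by
      exact_mod_cast congrArg (Nat.cast : ℕ → ZMod p) h1
    have c2 : ((k + j + 1 : ℕ) : ZMod p) * ((k + j).choose j : ZMod p)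
        = (((k + j + 1).choose (j + 1) : ZMod p)) * ((j + 1 : ℕ) : ZMod p) := by
      exact_mod_cast congrArg (Nat.cast : ℕ → ZMod p) h2
    rw [c1, ih', hneg]
    have he : (k + (j + 1) : ℕ) = k + j + 1 := by omega
    rw [he]
    linear_combination (-(-1 : ZMod p) ^ j) * c2

theorem convolution_eq_single_choose (p a b m n M : ℕ) (hp : p.Prime)
    (ha : 1 ≤ a ∧ a ≤ p - 1) (hb : 1 ≤ b ∧ b ≤ p - 1) (hab : a ≠ b)
    (hm : 1 ≤ m ∧ m ≤ p - 1) (hn : 1 ≤ n ∧ n ≤ p - 1)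
    (hM : (M : ℤ) = (m : ℤ) + n - ((p : ℤ) - 1)) :
    (∑ j ∈ Finset.range (M + 1),
        (m.choose (M - j) : ZMod p) * (n.choose j : ZMod p) *
          (a : ZMod p) ^ (M - j) * (b : ZMod p) ^ j) =
      ((a : ZMod p) - (b : ZMod p)) ^ M * (m.choose (p - n - 1) : ZMod p) := by
  have hp2 : 2 ≤ p := hp.two_le
  have hMle : M ≤ m := by omega
  set k := m - M with hk
  have hmk : m = M + k := by omega
  have hn' : n = p - 1 - k := by omega
  have hpn : p - n - 1 = k := by omega
  have hterm : ∀ j ∈ Finset.range (M + 1),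
      (m.choose (M - j) : ZMod p) * (n.choose j : ZMod p) *
          (a : ZMod p) ^ (M - j) * (b : ZMod p) ^ j
      = (m.choose M : ZMod p) * ((-(b : ZMod p)) ^ j * (a : ZMod p) ^ (M - j) * (M.choose j : ZMod p)) := by
    intro j hj
    rw [Finset.mem_range] at hj
    have hjM : j ≤ M := by omega
    have hnc : ((n.choose j : ℕ) : ZMod p) = (-1) ^ j * (((k + j).choose j : ZMod p)) := by
      rw [hn']
      exact choose_neg_cast p k hp j (by omega)
    have hnat : m.choose (M - j) * (k + j).choose j = m.choose M * M.choose j := by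
      have h := Nat.choose_mul (n := m) (k := M) (s := M - j) (by omega)
      rw [hmk] at h ⊢
      have e1 : M + k - (M - j) = k + j := by omega
      have e2 : M - (M - j) = j := by omega
      rw [e1, e2] at h
      rw [← h, Nat.choose_symm hjM]
    have hc : ((m.choose (M - j) : ℕ) : ZMod p) * (((k + j).choose j : ℕ) : ZMod p)
        = ((m.choose M : ℕ) : ZMod p) * ((M.choose j : ℕ) : ZMod p) := by
      exact_mod_cast congrArg (Nat.cast : ℕ → ZMod p) hnat
    rw [hnc, neg_pow]
    linear_combination ((-1 : ZMod p) ^ j * (a : ZMod p) ^ (M - j) * (b : ZMod p) ^ j) * hc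
  rw [Finset.sum_congr rfl hterm, ← Finset.mul_sum, ← add_pow, hpn]
  have hck : m.choose k = m.choose M := by
    have h := Nat.choose_symm (n := m) (k := M) hMle
    rw [← h]
  rw [hck, show (-(b : ZMod p) + a) = a - b by ring]
  ring
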